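/- Let k ≥ 2, 1 ≤ r < k-1, p ≥ 1, with 2p = diam(K(2k+r,k)) and r not dividing k-1. If A and B are k-subsets of [2k+r] that are not adjacent in the exact distance-2p Kneser graph K_{=2p}(2k+r,k), then their distance in K_{=2p}(2k+r,k) equals 2. -/

import Mathlib

/-- The Kneser graph: vertices are the `k`-subsets of `[n]`, adjacency is disjointness. -/
def kneserGraph (n k : ℕ) : SimpleGraph {A : Finset (Fin n) // A.card = k} where
  Adj A B := A ≠ B ∧ Disjoint A.1 B.1
  symm := ⟨fun A B h => ⟨h.1.symm, h.2.symm⟩⟩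
  loopless := ⟨fun A h => h.1 rfl⟩

/-- The exact distance-`d` graph of a graph `G`. -/
def exactDistanceGraph {V : Type*} (G : SimpleGraph V) (d : ℕ) : SimpleGraph V where
  Adj A B := A ≠ B ∧ G.dist A B = d
  symm := ⟨fun A B h => ⟨h.1.symm, by rw [SimpleGraph.dist_comm]; exact h.2⟩⟩
  loopless := ⟨fun A h => h.1 rfl⟩

namespace KneserAux

open Finset SimpleGraph

abbrev KV (k r : ℕ) := {A : Finset (Fin (2 * k + r)) // A.card = k}

variable {k r : ℕ}

lemma card_fin (k r : ℕ) : Fintype.card (Fin (2 * k + r)) = 2 * k + r := by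
  simp

lemma disj_of_subset_compl {s t : Finset (Fin (2 * k + r))} (h : t ⊆ sᶜ) :
    Disjoint s t :=
  Disjoint.mono_right h disjoint_compl_right

lemma ne_of_disj (hk : 1 ≤ k) {X W : KV k r} (h : Disjoint X.1 W.1) : X ≠ W := by
  intro he
  subst he
  rw [disjoint_self] at h
  have := X.2
  rw [h] at this
  simp [Finset.bot_eq_empty] at this
  omega

/-- Key counting fact (a): if `X` and `Z` are disjoint `k`-sets then
`|X ∩ Y| + |Z ∩ Y| ≤ k`. -/
lemma key_a {X Z : KV k r} (Y : KV k r) (hd : Disjoint X.1 Z.1) :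
    (X.1 ∩ Y.1).card + (Z.1 ∩ Y.1).card ≤ k := by
  have hdisj : Disjoint (X.1 ∩ Y.1) (Z.1 ∩ Y.1) :=
    hd.mono Finset.inter_subset_left Finset.inter_subset_left
  have hsub : (X.1 ∩ Y.1) ∪ (Z.1 ∩ Y.1) ⊆ Y.1 := by
    apply Finset.union_subset Finset.inter_subset_right Finset.inter_subset_right
  calc (X.1 ∩ Y.1).card + (Z.1 ∩ Y.1).card
      = ((X.1 ∩ Y.1) ∪ (Z.1 ∩ Y.1)).card := (Finset.card_union_of_disjoint hdisj).symm
    _ ≤ Y.1.card := Finset.card_le_card hsub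
    _ = k := Y.2

/-- Key counting fact (b): if `X` and `Z` are disjoint `k`-sets in `[2k+r]` then
`k ≤ |X ∩ Y| + |Z ∩ Y| + r`. -/
lemma key_b {X Z : KV k r} (Y : KV k r) (hd : Disjoint X.1 Z.1) :
    k ≤ (X.1 ∩ Y.1).card + (Z.1 ∩ Y.1).card + r := by
  have hUcard : (X.1 ∪ Z.1).card = 2 * k := by
    rw [Finset.card_union_of_disjoint hd, X.2, Z.2]; ring
  have hccard : ((X.1 ∪ Z.1)ᶜ).card = r := by
    rw [Finset.card_compl, hUcard, card_fin]; omega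
  have hsub : Y.1 ⊆ (X.1 ∩ Y.1) ∪ ((Z.1 ∩ Y.1) ∪ (X.1 ∪ Z.1)ᶜ) := by
    intro y hy
    simp only [Finset.mem_union, Finset.mem_inter, Finset.mem_compl]
    by_cases hx : y ∈ X.1
    · exact Or.inl ⟨hx, hy⟩
    · by_cases hz : y ∈ Z.1
      · exact Or.inr (Or.inl ⟨hz, hy⟩)
      · exact Or.inr (Or.inr (by simp [hx, hz]))
  calc k = Y.1.card := Y.2.symm
    _ ≤ ((X.1 ∩ Y.1) ∪ ((Z.1 ∩ Y.1) ∪ (X.1 ∪ Z.1)ᶜ)).card := Finset.card_le_card hsub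
    _ ≤ (X.1 ∩ Y.1).card + ((Z.1 ∩ Y.1) ∪ (X.1 ∪ Z.1)ᶜ).card := Finset.card_union_le _ _
    _ ≤ (X.1 ∩ Y.1).card + ((Z.1 ∩ Y.1).card + ((X.1 ∪ Z.1)ᶜ).card) := by
        exact Nat.add_le_add_left (Finset.card_union_le _ _) _
    _ = (X.1 ∩ Y.1).card + (Z.1 ∩ Y.1).card + r := by rw [hccard]; ring

/-- Lower bound: along any walk in the Kneser graph, intersection sizes are controlled. -/
lemma walk_lower {X Y : KV k r} (W : (kneserGraph (2 * k + r) k).Walk X Y) :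
    ∀ t : ℕ, (W.length = 2 * t → k ≤ (X.1 ∩ Y.1).card + t * r) ∧
      (W.length = 2 * t + 1 → (X.1 ∩ Y.1).card ≤ t * r) := by
  induction W with
  | nil =>
    intro t
    rename_i u
    constructor
    · intro _
      have : u.1 ∩ u.1 = u.1 := Finset.inter_self _
      rw [this, u.2]
      omega
    · intro h
      simp [SimpleGraph.Walk.length_nil] at h
  | cons h W ih =>
    rename_i u v w
    obtain ⟨hne, hd⟩ := id h
    intro t
    rw [SimpleGraph.Walk.length_cons]
    constructor
    · intro hlen
      -- length of W is 2*(t-1)+1, t ≥ 1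
      obtain ⟨t', rfl⟩ : ∃ t', t = t' + 1 := ⟨t - 1, by omega⟩
      have hW : W.length = 2 * t' + 1 := by omega
      have h1 := (ih t').2 hW
      have h2 := key_b (X := u) (Z := v) w hd
      have : (t' + 1) * r = t' * r + r := by ring
      omega
    · intro hlen
      have hW : W.length = 2 * t := by omega
      have h1 := (ih t).1 hW
      have h2 := key_a (X := u) (Z := v) w hd
      omega

/-- From a walk of length equal to the distance, lower bounds on the distance. -/
lemma dist_lower {X Y : KV k r} (hreach : (kneserGraph (2 * k + r) k).Reachable X Y) :
    ∀ t : ℕ, ((kneserGraph (2 * k + r) k).dist X Y = 2 * t →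
        k ≤ (X.1 ∩ Y.1).card + t * r) ∧
      ((kneserGraph (2 * k + r) k).dist X Y = 2 * t + 1 →
        (X.1 ∩ Y.1).card ≤ t * r) := by
  obtain ⟨W, hW⟩ := hreach.exists_walk_length_eq_dist
  intro t
  constructor
  · intro h; exact (walk_lower W t).1 (by omega)
  · intro h; exact (walk_lower W t).2 (by omega)

/-- Even upper bound: if `k ≤ |X ∩ Y| + t * r` then there is a walk of length `≤ 2t`. -/
lemma even_ub (hk : 1 ≤ k) (hr : 1 ≤ r) :
    ∀ t : ℕ, ∀ X Y : KV k r, k ≤ (X.1 ∩ Y.1).card + t * r →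
      ∃ W : (kneserGraph (2 * k + r) k).Walk X Y, W.length ≤ 2 * t := by
  intro t
  induction t with
  | zero =>
    intro X Y hXY
    simp only [Nat.zero_mul, Nat.add_zero] at hXY
    have h1 : X.1 ∩ Y.1 = X.1 :=
      Finset.eq_of_subset_of_card_le Finset.inter_subset_left (by rw [X.2]; exact hXY)
    have h2 : X.1 ⊆ Y.1 := by
      rw [← h1]; exact Finset.inter_subset_right
    have h3 : X.1 = Y.1 :=
      Finset.eq_of_subset_of_card_le h2 (by rw [X.2, Y.2])
    have : X = Y := Subtype.ext h3
    subst this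
    exact ⟨SimpleGraph.Walk.nil, by simp⟩
  | succ t ihT =>
    intro X Y hXY
    set s := (X.1 ∩ Y.1).card with hs
    by_cases hcase : k ≤ s + t * r
    · obtain ⟨W, hW⟩ := ihT X Y hcase
      exact ⟨W, by omega⟩
    · push_neg at hcase
      -- basic cards
      have hYX : (Y.1 \ X.1).card = k - s := by
        have : Y.1 \ X.1 = Y.1 \ (Y.1 ∩ X.1) := by
          rw [Finset.sdiff_inter_self_left]
        rw [this, Finset.card_sdiff_of_subset Finset.inter_subset_left, Y.2, Finset.inter_comm]
      have hXY' : (X.1 \ Y.1).card = k - s := by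
        have : X.1 \ Y.1 = X.1 \ (X.1 ∩ Y.1) := by
          rw [Finset.sdiff_inter_self_left]
        rw [this, Finset.card_sdiff_of_subset Finset.inter_subset_left, X.2]
      have hsk : s ≤ k := by
        have h := Finset.card_le_card (Finset.inter_subset_left : X.1 ∩ Y.1 ⊆ X.1)
        rw [X.2] at h; exact h
      by_cases hnear : k ≤ s + r
      · -- distance ≤ 2 : common neighbor of X and Y
        by_cases hXeqY : X = Y
        · subst hXeqY; exact ⟨SimpleGraph.Walk.nil, by simp⟩
        · have hUcard : (X.1 ∪ Y.1).card + s = 2 * k := by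
            have h := Finset.card_union_add_card_inter X.1 Y.1
            rw [X.2, Y.2] at h; omega
          have hcompl : k ≤ ((X.1 ∪ Y.1)ᶜ).card := by
            rw [Finset.card_compl, card_fin]
            omega
          obtain ⟨W0, hW0sub, hW0card⟩ := Finset.exists_subset_card_eq hcompl
          set Wv : KV k r := ⟨W0, hW0card⟩ with hWv
          have hdX : Disjoint X.1 Wv.1 :=
            disj_of_subset_compl (hW0sub.trans (Finset.compl_subset_compl.mpr
              Finset.subset_union_left))
          have hdY : Disjoint Wv.1 Y.1 :=
            (disj_of_subset_compl (hW0sub.trans (Finset.compl_subset_compl.mpr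
              Finset.subset_union_right))).symm
          have a1 : (kneserGraph (2 * k + r) k).Adj X Wv := ⟨ne_of_disj hk hdX, hdX⟩
          have a2 : (kneserGraph (2 * k + r) k).Adj Wv Y :=
            ⟨(ne_of_disj hk hdY.symm).symm, hdY⟩
          refine ⟨SimpleGraph.Walk.cons a1 (SimpleGraph.Walk.cons a2 SimpleGraph.Walk.nil), ?_⟩
          simp only [SimpleGraph.Walk.length_cons, SimpleGraph.Walk.length_nil]
          omega
      · push_neg at hnear
        -- build intermediate X' with |X' ∩ Y| ≥ s + r, reachable from X in 2 steps
        have hksr : s + r < k := by omega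
        obtain ⟨F, hFsub, hFcard⟩ := Finset.exists_subset_card_eq (s := Y.1 \ X.1) (n := r) (by omega)
        obtain ⟨G', hGsub, hGcard⟩ :=
          Finset.exists_subset_card_eq (s := X.1 \ Y.1) (n := k - s - r) (by omega)
        have hdisjIF : Disjoint (X.1 ∩ Y.1) F :=
          Finset.disjoint_left.mpr fun a ha haF => by
            have := hFsub haF
            simp only [Finset.mem_sdiff] at this
            exact this.2 (Finset.mem_inter.mp ha).1
        have hdisjIG : Disjoint (X.1 ∩ Y.1) G' :=
          Finset.disjoint_left.mpr fun a ha haG => by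
            have := hGsub haG
            simp only [Finset.mem_sdiff] at this
            exact this.2 (Finset.mem_inter.mp ha).2
        have hdisjFG : Disjoint F G' :=
          Finset.disjoint_left.mpr fun a haF haG => by
            have h1 := hFsub haF
            have h2 := hGsub haG
            simp only [Finset.mem_sdiff] at h1 h2
            exact h1.2 h2.1
        set X'set : Finset (Fin (2 * k + r)) := (X.1 ∩ Y.1) ∪ F ∪ G' with hX'set
        have hX'card : X'set.card = k := by
          rw [hX'set, Finset.card_union_of_disjoint, Finset.card_union_of_disjoint hdisjIF,
            hFcard, hGcard]
          · omega
          · exact Finset.disjoint_union_left.mpr ⟨hdisjIG, hdisjFG⟩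
        set X' : KV k r := ⟨X'set, hX'card⟩ with hX'
        -- |X' ∩ Y| ≥ s + r
        have hsubIY : (X.1 ∩ Y.1) ∪ F ⊆ X'set ∩ Y.1 := by
          apply Finset.subset_inter
          · exact (Finset.union_subset_union_right (Finset.Subset.refl _)).trans
              Finset.subset_union_left
          · apply Finset.union_subset Finset.inter_subset_right
            exact hFsub.trans (Finset.sdiff_subset)
        have hX'Y : s + r ≤ (X'set ∩ Y.1).card := by
          have := Finset.card_le_card hsubIY
          rwa [Finset.card_union_of_disjoint hdisjIF, hFcard] at this
        have hX'Yk : k ≤ (X'.1 ∩ Y.1).card + t * r := by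
          show k ≤ (X'set ∩ Y.1).card + t * r
          have h9 : (t + 1) * r = t * r + r := by ring
          omega
        obtain ⟨W1, hW1⟩ := ihT X' Y hX'Yk
        -- common neighbor of X and X'
        have hX'subXF : X'set ⊆ X.1 ∪ F :=
          Finset.union_subset (Finset.union_subset
            (Finset.inter_subset_left.trans Finset.subset_union_left)
            Finset.subset_union_right)
            ((hGsub.trans Finset.sdiff_subset).trans Finset.subset_union_left)
        have hdisjXF : Disjoint X.1 F :=
          Finset.disjoint_left.mpr fun a ha haF => by
            have := hFsub haF
            simp only [Finset.mem_sdiff] at this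
            exact this.2 ha
        have hXFcard : (X.1 ∪ F).card = k + r := by
          rw [Finset.card_union_of_disjoint hdisjXF, X.2, hFcard]
        have hcompl : k ≤ ((X.1 ∪ F)ᶜ).card := by
          rw [Finset.card_compl, hXFcard, card_fin]; omega
        obtain ⟨W0, hW0sub, hW0card⟩ := Finset.exists_subset_card_eq hcompl
        set Wv : KV k r := ⟨W0, hW0card⟩ with hWv
        have hdX : Disjoint X.1 Wv.1 :=
          disj_of_subset_compl (hW0sub.trans (Finset.compl_subset_compl.mpr
            Finset.subset_union_left))
        have hdX' : Disjoint Wv.1 X'.1 :=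
          (disj_of_subset_compl (hW0sub.trans (Finset.compl_subset_compl.mpr
            hX'subXF))).symm
        have a1 : (kneserGraph (2 * k + r) k).Adj X Wv := ⟨ne_of_disj hk hdX, hdX⟩
        have a2 : (kneserGraph (2 * k + r) k).Adj Wv X' :=
          ⟨(ne_of_disj hk hdX'.symm).symm, hdX'⟩
        refine ⟨SimpleGraph.Walk.cons a1 (SimpleGraph.Walk.cons a2 W1), ?_⟩
        simp only [SimpleGraph.Walk.length_cons]
        omega

/-- Odd upper bound: if `|X ∩ Y| ≤ t * r` then there is a walk of length `≤ 2t + 1`. -/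
lemma odd_ub (hk : 1 ≤ k) (hr : 1 ≤ r) (t : ℕ) (X Y : KV k r)
    (h : (X.1 ∩ Y.1).card ≤ t * r) :
    ∃ W : (kneserGraph (2 * k + r) k).Walk X Y, W.length ≤ 2 * t + 1 := by
  set s := (X.1 ∩ Y.1).card with hs
  have hsk : s ≤ k := by
    have h := Finset.card_le_card (Finset.inter_subset_left : X.1 ∩ Y.1 ⊆ X.1)
    rw [X.2] at h; exact h
  have hYX : (Y.1 \ X.1).card = k - s := by
    have : Y.1 \ X.1 = Y.1 \ (Y.1 ∩ X.1) := by rw [Finset.sdiff_inter_self_left]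
    rw [this, Finset.card_sdiff_of_subset Finset.inter_subset_left, Y.2, Finset.inter_comm]
  -- S ⊆ Xᶜ \ Y with |S| = s
  have hXc : (X.1ᶜ).card = k + r := by
    rw [Finset.card_compl, X.2, card_fin]; omega
  have hXcY : (X.1ᶜ \ Y.1).card = r + s := by
    have h1 : X.1ᶜ \ Y.1 = X.1ᶜ \ (X.1ᶜ ∩ Y.1) := by rw [Finset.sdiff_inter_self_left]
    have h2 : X.1ᶜ ∩ Y.1 = Y.1 \ X.1 := by
      ext a; simp [Finset.mem_inter, Finset.mem_sdiff, Finset.mem_compl, and_comm]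
    rw [h1, Finset.card_sdiff_of_subset Finset.inter_subset_left, h2, hYX, hXc]
    omega
  obtain ⟨S, hSsub, hScard⟩ := Finset.exists_subset_card_eq (s := X.1ᶜ \ Y.1) (n := s) (by omega)
  have hdisjYS : Disjoint (Y.1 \ X.1) S :=
    Finset.disjoint_left.mpr fun a ha haS => by
      have h1 := hSsub haS
      simp only [Finset.mem_sdiff] at h1 ha
      exact h1.2 ha.1
  set Zset : Finset (Fin (2 * k + r)) := (Y.1 \ X.1) ∪ S with hZset
  have hZcard : Zset.card = k := by
    rw [hZset, Finset.card_union_of_disjoint hdisjYS, hYX, hScard]; omega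
  set Z : KV k r := ⟨Zset, hZcard⟩ with hZ
  have hdXZ : Disjoint X.1 Z.1 := by
    apply Finset.disjoint_left.mpr
    intro a ha haZ
    rcases Finset.mem_union.mp haZ with h1 | h1
    · exact (Finset.mem_sdiff.mp h1).2 ha
    · exact (Finset.mem_compl.mp (Finset.mem_sdiff.mp (hSsub h1)).1) ha
  have hZY : Z.1 ∩ Y.1 = Y.1 \ X.1 := by
    rw [hZ]
    show Zset ∩ Y.1 = Y.1 \ X.1
    rw [hZset, Finset.union_inter_distrib_right]
    have h1 : (Y.1 \ X.1) ∩ Y.1 = Y.1 \ X.1 :=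
      Finset.inter_eq_left.mpr Finset.sdiff_subset
    have h2 : S ∩ Y.1 = ∅ := by
      apply Finset.eq_empty_of_forall_notMem
      intro a ha
      obtain ⟨h3, h4⟩ := Finset.mem_inter.mp ha
      exact (Finset.mem_sdiff.mp (hSsub h3)).2 h4
    rw [h1, h2, Finset.union_empty]
  have hZYk : k ≤ (Z.1 ∩ Y.1).card + t * r := by
    rw [hZY, hYX]; omega
  obtain ⟨W1, hW1⟩ := even_ub hk hr t Z Y hZYk
  have a1 : (kneserGraph (2 * k + r) k).Adj X Z := ⟨ne_of_disj hk hdXZ, hdXZ⟩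
  exact ⟨SimpleGraph.Walk.cons a1 W1, by
    simp only [SimpleGraph.Walk.length_cons]; omega⟩

/-- There exist pairs of vertices with any prescribed intersection size `s ≤ k`. -/
lemma exists_pair (hk : 1 ≤ k) (s : ℕ) (hs : s ≤ k) :
    ∃ X Y : KV k r, (X.1 ∩ Y.1).card = s := by
  obtain ⟨X0, -, hX0card⟩ :=
    Finset.exists_subset_card_eq (s := (Finset.univ : Finset (Fin (2 * k + r)))) (n := k)
      (by rw [Finset.card_univ, card_fin]; omega)
  obtain ⟨S, hSsub, hScard⟩ := Finset.exists_subset_card_eq (s := X0) (n := s) (by omega)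
  have hX0c : (X0ᶜ).card = k + r := by
    rw [Finset.card_compl, hX0card, card_fin]; omega
  obtain ⟨T, hTsub, hTcard⟩ := Finset.exists_subset_card_eq (s := X0ᶜ) (n := k - s) (by omega)
  have hdisjST : Disjoint S T := by
    apply Finset.disjoint_left.mpr
    intro a ha haT
    exact (Finset.mem_compl.mp (hTsub haT)) (hSsub ha)
  have hYcard : (S ∪ T).card = k := by
    rw [Finset.card_union_of_disjoint hdisjST, hScard, hTcard]; omega
  refine ⟨⟨X0, hX0card⟩, ⟨S ∪ T, hYcard⟩, ?_⟩
  show (X0 ∩ (S ∪ T)).card = s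
  have : X0 ∩ (S ∪ T) = S := by
    rw [Finset.inter_union_distrib_left]
    have h1 : X0 ∩ S = S := Finset.inter_eq_right.mpr hSsub
    have h2 : X0 ∩ T = ∅ := by
      apply Finset.eq_empty_of_forall_notMem
      intro a ha
      obtain ⟨h3, h4⟩ := Finset.mem_inter.mp ha
      exact (Finset.mem_compl.mp (hTsub h4)) h3
    rw [h1, h2, Finset.union_empty]
  rw [this, hScard]

/-- Existence of a common "far" vertex: a `C` with `|A ∩ C| = |B ∩ C| = s`. -/
lemma exists_C (A B : KV k r) (s : ℕ) (h1 : 1 ≤ s) (h2 : 2 * s ≤ k)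
    (h3 : k ≤ 2 * s + r) :
    ∃ C : KV k r, (A.1 ∩ C.1).card = s ∧ (B.1 ∩ C.1).card = s := by
  classical
  set m := (A.1 ∩ B.1).card with hm
  have hmk : m ≤ k := by
    have h := Finset.card_le_card (Finset.inter_subset_left : A.1 ∩ B.1 ⊆ A.1)
    rw [A.2] at h; exact h
  set i := min m s with hi
  -- region cards
  have hAB : (A.1 \ B.1).card = k - m := by
    have : A.1 \ B.1 = A.1 \ (A.1 ∩ B.1) := by rw [Finset.sdiff_inter_self_left]
    rw [this, Finset.card_sdiff_of_subset Finset.inter_subset_left, A.2]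
  have hBA : (B.1 \ A.1).card = k - m := by
    have : B.1 \ A.1 = B.1 \ (B.1 ∩ A.1) := by rw [Finset.sdiff_inter_self_left]
    rw [this, Finset.card_sdiff_of_subset Finset.inter_subset_left, B.2, Finset.inter_comm]
  have hUcard : (A.1 ∪ B.1).card + m = 2 * k := by
    have h := Finset.card_union_add_card_inter A.1 B.1
    rw [A.2, B.2] at h; omega
  have hOut : ((A.1 ∪ B.1)ᶜ).card = r + m := by
    rw [Finset.card_compl, card_fin]; omega
  -- the four pieces
  obtain ⟨P1, hP1sub, hP1card⟩ := Finset.exists_subset_card_eq (s := A.1 ∩ B.1) (n := i) (by omega)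
  obtain ⟨P2, hP2sub, hP2card⟩ := Finset.exists_subset_card_eq (s := A.1 \ B.1) (n := s - i)
    (by rw [hAB]; omega)
  obtain ⟨P3, hP3sub, hP3card⟩ := Finset.exists_subset_card_eq (s := B.1 \ A.1) (n := s - i)
    (by rw [hBA]; omega)
  have he : k + i - 2 * s ≤ r + m := by omega
  obtain ⟨P4, hP4sub, hP4card⟩ := Finset.exists_subset_card_eq (s := (A.1 ∪ B.1)ᶜ)
    (n := k + i - 2 * s) (by omega)
  -- pairwise disjointness
  have hP4A : Disjoint A.1 P4 :=
    disj_of_subset_compl (hP4sub.trans (Finset.compl_subset_compl.mpr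
      Finset.subset_union_left))
  have hP4B : Disjoint B.1 P4 :=
    disj_of_subset_compl (hP4sub.trans (Finset.compl_subset_compl.mpr
      Finset.subset_union_right))
  have hd12 : Disjoint P1 P2 :=
    Finset.disjoint_left.mpr fun a ha hb =>
      (Finset.mem_sdiff.mp (hP2sub hb)).2 (Finset.mem_inter.mp (hP1sub ha)).2
  have hd13 : Disjoint P1 P3 :=
    Finset.disjoint_left.mpr fun a ha hb =>
      (Finset.mem_sdiff.mp (hP3sub hb)).2 (Finset.mem_inter.mp (hP1sub ha)).1
  have hd23 : Disjoint P2 P3 :=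
    Finset.disjoint_left.mpr fun a ha hb =>
      (Finset.mem_sdiff.mp (hP3sub hb)).2 (Finset.mem_sdiff.mp (hP2sub ha)).1
  have hd14 : Disjoint P1 P4 :=
    hP4A.mono_left (hP1sub.trans Finset.inter_subset_left)
  have hd24 : Disjoint P2 P4 :=
    hP4A.mono_left (hP2sub.trans Finset.sdiff_subset)
  have hd34 : Disjoint P3 P4 :=
    hP4B.mono_left (hP3sub.trans Finset.sdiff_subset)
  set Cset : Finset (Fin (2 * k + r)) := P1 ∪ P2 ∪ P3 ∪ P4 with hCset
  have hCcard : Cset.card = k := by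
    rw [hCset, Finset.card_union_of_disjoint, Finset.card_union_of_disjoint,
      Finset.card_union_of_disjoint hd12, hP1card, hP2card, hP3card, hP4card]
    · omega
    · exact Finset.disjoint_union_left.mpr ⟨hd13, hd23⟩
    · exact Finset.disjoint_union_left.mpr
        ⟨Finset.disjoint_union_left.mpr ⟨hd14, hd24⟩, hd34⟩
  refine ⟨⟨Cset, hCcard⟩, ?_, ?_⟩
  · show (A.1 ∩ Cset).card = s
    have hInt : A.1 ∩ Cset = P1 ∪ P2 := by
      rw [hCset]
      rw [Finset.inter_union_distrib_left, Finset.inter_union_distrib_left,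
        Finset.inter_union_distrib_left]
      have e1 : A.1 ∩ P1 = P1 :=
        Finset.inter_eq_right.mpr (hP1sub.trans Finset.inter_subset_left)
      have e2 : A.1 ∩ P2 = P2 :=
        Finset.inter_eq_right.mpr (hP2sub.trans Finset.sdiff_subset)
      have e3 : A.1 ∩ P3 = ∅ := by
        apply Finset.eq_empty_of_forall_notMem
        intro a ha
        obtain ⟨h4, h5⟩ := Finset.mem_inter.mp ha
        exact (Finset.mem_sdiff.mp (hP3sub h5)).2 h4
      have e4 : A.1 ∩ P4 = ∅ := Finset.disjoint_iff_inter_eq_empty.mp hP4A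
      rw [e1, e2, e3, e4]
      simp
    rw [hInt, Finset.card_union_of_disjoint hd12, hP1card, hP2card]
    omega
  · show (B.1 ∩ Cset).card = s
    have hInt : B.1 ∩ Cset = P1 ∪ P3 := by
      rw [hCset]
      rw [Finset.inter_union_distrib_left, Finset.inter_union_distrib_left,
        Finset.inter_union_distrib_left]
      have e1 : B.1 ∩ P1 = P1 :=
        Finset.inter_eq_right.mpr (hP1sub.trans Finset.inter_subset_right)
      have e2 : B.1 ∩ P2 = ∅ := by
        apply Finset.eq_empty_of_forall_notMem
        intro a ha
        obtain ⟨h4, h5⟩ := Finset.mem_inter.mp ha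
        exact (Finset.mem_sdiff.mp (hP2sub h5)).2 h4
      have e3 : B.1 ∩ P3 = P3 :=
        Finset.inter_eq_right.mpr (hP3sub.trans Finset.sdiff_subset)
      have e4 : B.1 ∩ P4 = ∅ := Finset.disjoint_iff_inter_eq_empty.mp hP4B
      rw [e1, e2, e3, e4]
      simp
    rw [hInt, Finset.card_union_of_disjoint hd13, hP1card, hP3card]
    omega

end KneserAux

open KneserAux Finset SimpleGraph in
theorem stmt10 (k r p : ℕ) (hk : 2 ≤ k) (hr : 1 ≤ r) (hrk : r < k - 1) (hp : 1 ≤ p)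
    (hdiam : 2 * p = (kneserGraph (2 * k + r) k).diam) (hnd : ¬ r ∣ (k - 1))
    (A B : {A : Finset (Fin (2 * k + r)) // A.card = k}) (hAB : A ≠ B)
    (hnadj : ¬ (exactDistanceGraph (kneserGraph (2 * k + r) k) (2 * p)).Adj A B) :
    (exactDistanceGraph (kneserGraph (2 * k + r) k) (2 * p)).dist A B = 2 := by
  classical
  have hk1 : 1 ≤ k := by omega
  -- nonempty vertex type
  obtain ⟨X1, Y1, -⟩ := exists_pair (r := r) hk1 k le_rfl
  have : Nonempty (KV k r) := ⟨X1⟩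
  -- finiteness of the diameter
  have hd0 : (kneserGraph (2 * k + r) k).diam ≠ 0 := by omega
  have hdne : (kneserGraph (2 * k + r) k).ediam ≠ ⊤ :=
    SimpleGraph.ediam_ne_top_of_diam_ne_zero hd0
  have hreach : ∀ X Y : KV k r, (kneserGraph (2 * k + r) k).Reachable X Y := by
    intro X Y
    exact SimpleGraph.reachable_of_edist_ne_top
      ((SimpleGraph.edist_le_ediam).trans_lt hdne.lt_top).ne
  have hdle : ∀ X Y : KV k r, (kneserGraph (2 * k + r) k).dist X Y ≤ 2 * p := by
    intro X Y
    rw [hdiam]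
    exact SimpleGraph.dist_le_diam hdne
  -- a pair realizing the diameter
  obtain ⟨X0, Y0, hXY0⟩ := SimpleGraph.exists_dist_eq_diam (G := kneserGraph (2 * k + r) k)
  have hd2p : (kneserGraph (2 * k + r) k).dist X0 Y0 = 2 * p := by rw [hXY0, ← hdiam]
  -- k is large: k ≥ 2 * (r * (p-1)) + 2
  have hlow1 : r * (p - 1) + 1 ≤ (X0.1 ∩ Y0.1).card := by
    by_contra hcon
    push_neg at hcon
    obtain ⟨W, hW⟩ := odd_ub hk1 hr (p - 1) X0 Y0 (by
      have : r * (p - 1) = (p - 1) * r := by ring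
      omega)
    have := SimpleGraph.dist_le W
    omega
  have hlow2 : (X0.1 ∩ Y0.1).card + r * (p - 1) + 1 ≤ k := by
    by_contra hcon
    push_neg at hcon
    obtain ⟨W, hW⟩ := even_ub hk1 hr (p - 1) X0 Y0 (by
      have : r * (p - 1) = (p - 1) * r := by ring
      omega)
    have := SimpleGraph.dist_le W
    omega
  have hkbig : 2 * (r * (p - 1)) + 2 ≤ k := by omega
  -- k is small: k ≤ r * (p-1) + 1 + p * r
  have hsk : r * (p - 1) + 1 ≤ k := by omega
  have hksmall : k ≤ r * (p - 1) + 1 + p * r := by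
    obtain ⟨X', Y', hXY'⟩ := exists_pair (r := r) hk1 (r * (p - 1) + 1) hsk
    have hd' := hdle X' Y'
    rcases Nat.even_or_odd ((kneserGraph (2 * k + r) k).dist X' Y') with ⟨t, ht⟩ | ⟨t, ht⟩
    · have hb := (dist_lower (hreach X' Y') t).1 (by omega)
      have htp : t ≤ p := by omega
      have : t * r ≤ p * r := Nat.mul_le_mul_right r htp
      have hpr : p * r = r * (p - 1) + r := by
        have hp' : p = (p - 1) + 1 := by omega
        conv_lhs => rw [hp']
        ring
      omega
    · have hb := (dist_lower (hreach X' Y') t).2 (by omega)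
      have htp : t ≤ p - 1 := by omega
      have h1 : t * r ≤ (p - 1) * r := Nat.mul_le_mul_right r htp
      have h2 : (p - 1) * r = r * (p - 1) := by ring
      rw [hXY'] at hb
      omega
  -- the intersection size for the far vertex C
  have hs1 : 1 ≤ r * (p - 1) + 1 := by omega
  have hs2 : 2 * (r * (p - 1) + 1) ≤ k := by omega
  have hs3 : k ≤ 2 * (r * (p - 1) + 1) + r := by
    have hpr : p * r = r * (p - 1) + r := by
      have hp' : p = (p - 1) + 1 := by omega
      conv_lhs => rw [hp']
      ring
    omega
  obtain ⟨C, hCA, hCB⟩ := exists_C A B (r * (p - 1) + 1) hs1 hs2 hs3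
  -- dist A C = dist B C = 2p
  have key : ∀ X : KV k r, (X.1 ∩ C.1).card = r * (p - 1) + 1 →
      (kneserGraph (2 * k + r) k).dist X C = 2 * p := by
    intro X hXC
    have hle := hdle X C
    rcases Nat.even_or_odd ((kneserGraph (2 * k + r) k).dist X C) with ⟨t, ht⟩ | ⟨t, ht⟩
    · have hb := (dist_lower (hreach X C) t).1 (by omega)
      rw [hXC] at hb
      have htp : p ≤ t := by
        by_contra hcon
        push_neg at hcon
        have h1 : t * r ≤ (p - 1) * r := Nat.mul_le_mul_right r (by omega)
        have h2 : (p - 1) * r = r * (p - 1) := by ring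
        omega
      omega
    · have hb := (dist_lower (hreach X C) t).2 (by omega)
      rw [hXC] at hb
      have htp : p ≤ t := by
        by_contra hcon
        push_neg at hcon
        have h1 : t * r ≤ (p - 1) * r := Nat.mul_le_mul_right r (by omega)
        have h2 : (p - 1) * r = r * (p - 1) := by ring
        omega
      omega
  have hdAC : (kneserGraph (2 * k + r) k).dist A C = 2 * p := key A hCA
  have hdBC : (kneserGraph (2 * k + r) k).dist B C = 2 * p := key B hCB
  have hCneA : A ≠ C := by
    intro h
    rw [h] at hCA
    rw [Finset.inter_self, C.2] at hCA
    omega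
  have hCneB : B ≠ C := by
    intro h
    rw [h] at hCB
    rw [Finset.inter_self, C.2] at hCB
    omega
  -- assemble in the exact distance graph
  have a1 : (exactDistanceGraph (kneserGraph (2 * k + r) k) (2 * p)).Adj A C := ⟨hCneA, hdAC⟩
  have a2 : (exactDistanceGraph (kneserGraph (2 * k + r) k) (2 * p)).Adj C B :=
    ⟨fun h => hCneB h.symm, by rw [SimpleGraph.dist_comm]; exact hdBC⟩
  have hwalk : (exactDistanceGraph (kneserGraph (2 * k + r) k) (2 * p)).dist A B ≤ 2 := by
    have := SimpleGraph.dist_le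
      (SimpleGraph.Walk.cons a1 (SimpleGraph.Walk.cons a2 SimpleGraph.Walk.nil))
    simpa using this
  have hne1 : (exactDistanceGraph (kneserGraph (2 * k + r) k) (2 * p)).dist A B ≠ 1 := by
    intro h
    exact hnadj (SimpleGraph.dist_eq_one_iff_adj.mp h)
  have hne0 : (exactDistanceGraph (kneserGraph (2 * k + r) k) (2 * p)).dist A B ≠ 0 := by
    have hreachH : (exactDistanceGraph (kneserGraph (2 * k + r) k) (2 * p)).Reachable A B :=
      ⟨SimpleGraph.Walk.cons a1 (SimpleGraph.Walk.cons a2 SimpleGraph.Walk.nil)⟩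
    have := hreachH.pos_dist_of_ne hAB
    omega
  omega
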